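/- Let g:[a,b]→ℝ be left-continuous and increasing, f:[a,b]→ℝ g-Lipschitz with constant H, and assume f^C and g^C are Lipschitz with constant H. Then the one-point corrected rule satisfies: |f^C(a)(g^C(b)−g^C(a)) + Σ_{s∈[a,b)}[f(s)Δ⁺g(s) + Δ⁺f(s)(g^C(b)−g^C(s))] − ∫_{[a,b)} f dμ_g| ≤ H²(b−a)². -/

import Mathlib

open Set MeasureTheory
open Filter Function
open scoped ENNReal NNReal


/-- Right jump of a function: `u(t⁺) - u(t)`. -/
noncomputable def rjump (u : ℝ → ℝ) (t : ℝ) : ℝ := Function.rightLim u t - u t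

/-- Cumulative jump part of `u` on `[a, t)`: `u^B(t) = Σ_{s ∈ [a,t)} Δ⁺u(s)`. -/
noncomputable def jumpPart (u : ℝ → ℝ) (a t : ℝ) : ℝ :=
  ∑' s : ℝ, Set.indicator (Set.Ico a t) (fun v => rjump u v) s

/-- Continuous part of `u` (relative to the base point `a`): `u^C = u - u^B`. -/
noncomputable def contPart (u : ℝ → ℝ) (a t : ℝ) : ℝ := u t - jumpPart u a t

/-- `I` is the Kurzweil–Stieltjes integral `∫_a^b f dg`: for every `ε > 0` there is a
gauge `δ` such that every `δ`-fine tagged partition of `[a,b]` has Riemann–Stieltjes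
sum within `ε` of `I`. -/
def IsKSIntegral (f g : ℝ → ℝ) (a b I : ℝ) : Prop :=
  ∀ ε > (0:ℝ), ∃ δ : ℝ → ℝ, (∀ x, 0 < δ x) ∧
    ∀ (n : ℕ) (t ξ : ℕ → ℝ),
      t 0 = a → t n = b →
      (∀ i < n, t i < t (i + 1)) →
      (∀ i < n, t i ≤ ξ i ∧ ξ i ≤ t (i + 1)) →
      (∀ i < n, ξ i - δ (ξ i) < t i ∧ t (i + 1) < ξ i + δ (ξ i)) →
      |(∑ i ∈ Finset.range n, f (ξ i) * (g (t (i + 1)) - g (t i))) - I| < ε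

/-- `f` is `g`-Lipschitz continuous on `[a,b]` with constant `H`. -/
def GLipschitzOn (f g : ℝ → ℝ) (H a b : ℝ) : Prop :=
  ∀ t ∈ Set.Icc a b, ∀ s ∈ Set.Icc a b, |f t - f s| ≤ H * |g t - g s|

/-- `g` is left-continuous at every point of `s`. -/
def LeftContOn (g : ℝ → ℝ) (s : Set ℝ) : Prop :=
  ∀ t ∈ s, Filter.Tendsto g (nhdsWithin t (Set.Iio t)) (nhds (g t))

set_option maxHeartbeats 4000000

/-- Corrected one-point rule. If `g` is left-continuous and increasing,
`f` is `g`-Lipschitz with constant `H`, and `f^C`, `g^C` are Lipschitz with constant `H`,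
then
`|f^C(a)(g^C(b)-g^C(a)) + Σ_{s∈[a,b)}[f(s)Δ⁺g(s) + Δ⁺f(s)(g^C(b)-g^C(s))]
  - ∫_{[a,b)} f dμ_g| ≤ H²(b-a)²`. -/
theorem corrected_onePoint_rule_error
    (a b H : ℝ) (hab : a ≤ b) (hH : 0 < H) (g f : ℝ → ℝ)
    (hg : MonotoneOn g (Set.Icc a b))
    (hglc : LeftContOn g (Set.Ioo a b))
    (hf : GLipschitzOn f g H a b)
    (hfC : ∀ x ∈ Set.Icc a b, ∀ y ∈ Set.Icc a b,
      |contPart f a x - contPart f a y| ≤ H * |x - y|)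
    (hgC : ∀ x ∈ Set.Icc a b, ∀ y ∈ Set.Icc a b,
      |contPart g a x - contPart g a y| ≤ H * |x - y|)
    (μ : Measure ℝ)
    (hμ : ∀ c d : ℝ, a ≤ c → c ≤ d → d ≤ b →
      μ (Set.Ico c d) = ENNReal.ofReal (g d - g c))
    (hfi : IntegrableOn f (Set.Ico a b) μ) :
    |contPart f a a * (contPart g a b - contPart g a a)
      + (∑' s : ℝ, Set.indicator (Set.Ico a b)
          (fun u => f u * rjump g u + rjump f u * (contPart g a b - contPart g a u)) s)
      - ∫ x in Set.Ico a b, f x ∂μ| ≤ H ^ 2 * (b - a) ^ 2 := by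
  
  classical
  have hf : ∀ t ∈ Set.Icc a b, ∀ s ∈ Set.Icc a b, |f t - f s| ≤ H * |g t - g s| := hf
  set G : ℝ → ℝ := fun t => g (Set.projIcc a b hab t) with hGdef
  set F : ℝ → ℝ := fun t => f (Set.projIcc a b hab t) with hFdef
  have hGg : ∀ t ∈ Set.Icc a b, G t = g t := by
    intro t ht; simp [hGdef, Set.projIcc_of_mem hab ht]
  have hFf : ∀ t ∈ Set.Icc a b, F t = f t := by
    intro t ht; simp [hFdef, Set.projIcc_of_mem hab ht]
  have hGmono : Monotone G := fun t u htu =>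
    hg (Set.projIcc a b hab t).2 (Set.projIcc a b hab u).2 (Set.monotone_projIcc hab htu)
  have hFG : ∀ t u : ℝ, |F t - F u| ≤ H * |G t - G u| := fun t u =>
    hf _ (Set.projIcc a b hab t).2 _ (Set.projIcc a b hab u).2
  -- eventual equality near s from the right
  have hgG_ev : ∀ s ∈ Set.Ico a b, g =ᶠ[nhdsWithin s (Set.Ioi s)] G := by
    intro s hs
    filter_upwards [Ioo_mem_nhdsGT_of_mem (⟨le_refl s, hs.2⟩ : s ∈ Set.Ico s b)] with x hx
    exact (hGg x ⟨hs.1.trans hx.1.le, hx.2.le⟩).symm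
  have hfF_ev : ∀ s ∈ Set.Ico a b, f =ᶠ[nhdsWithin s (Set.Ioi s)] F := by
    intro s hs
    filter_upwards [Ioo_mem_nhdsGT_of_mem (⟨le_refl s, hs.2⟩ : s ∈ Set.Ico s b)] with x hx
    exact (hFf x ⟨hs.1.trans hx.1.le, hx.2.le⟩).symm
  have hgt : ∀ s ∈ Set.Ico a b, Filter.Tendsto g (nhdsWithin s (Set.Ioi s))
      (nhds (Function.rightLim G s)) := fun s hs =>
    (hGmono.tendsto_rightLim s).congr' (hgG_ev s hs).symm
  have hrg : ∀ s ∈ Set.Ico a b, Function.rightLim g s = Function.rightLim G s := fun s hs =>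
    rightLim_eq_of_tendsto (h := nhdsGT_neBot s) (hgt s hs)
  -- right limits of f exist
  have hFtend : ∀ s : ℝ, ∃ y, Filter.Tendsto F (nhdsWithin s (Set.Ioi s)) (nhds y) := by
    intro s
    rw [← cauchy_map_iff_exists_tendsto]
    refine Metric.cauchy_iff.2 ⟨Filter.map_neBot, fun ε hε => ?_⟩
    set L := Function.rightLim G s with hL
    have hball : {x : ℝ | dist (G x) L < ε / (2 * H)} ∈ nhdsWithin s (Set.Ioi s) :=
      hGmono.tendsto_rightLim s (Metric.ball_mem_nhds L (by positivity))
    refine ⟨F '' {x : ℝ | dist (G x) L < ε / (2 * H)}, Filter.image_mem_map hball, ?_⟩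
    rintro _ ⟨x, hx, rfl⟩ _ ⟨y, hy, rfl⟩
    have hd : dist (G x) (G y) < ε / H := by
      calc dist (G x) (G y) ≤ dist (G x) L + dist (G y) L := dist_triangle_right _ _ _
        _ < ε / (2 * H) + ε / (2 * H) := add_lt_add hx hy
        _ = ε / H := by field_simp; ring
    calc dist (F x) (F y) = |F x - F y| := Real.dist_eq _ _
      _ ≤ H * |G x - G y| := hFG x y
      _ = H * dist (G x) (G y) := by rw [Real.dist_eq]
      _ < H * (ε / H) := by exact mul_lt_mul_of_pos_left hd hH
      _ = ε := by field_simp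
  have hft : ∀ s ∈ Set.Ico a b, Filter.Tendsto f (nhdsWithin s (Set.Ioi s))
      (nhds (Function.rightLim f s)) := by
    intro s hs
    obtain ⟨y, hy⟩ := hFtend s
    have h2 : Filter.Tendsto f (nhdsWithin s (Set.Ioi s)) (nhds y) :=
      hy.congr' (hfF_ev s hs).symm
    rwa [rightLim_eq_of_tendsto (h := nhdsGT_neBot s) h2]
  -- jump inequalities
  have hjg0 : ∀ s ∈ Set.Ico a b, 0 ≤ rjump g s := by
    intro s hs
    have : G s ≤ Function.rightLim G s := hGmono.le_rightLim le_rfl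
    rw [hGg s ⟨hs.1, hs.2.le⟩] at this
    simp only [rjump, hrg s hs]
    linarith
  have hjgle : ∀ s ∈ Set.Ico a b, ∀ d, s < d → d ≤ b → rjump g s ≤ g d - g s := by
    intro s hs d hsd hdb
    have : Function.rightLim G s ≤ G d := hGmono.rightLim_le hsd
    rw [hGg d ⟨hs.1.trans hsd.le, hdb⟩] at this
    simp only [rjump, hrg s hs]
    linarith
  have hjf : ∀ s ∈ Set.Ico a b, |rjump f s| ≤ H * rjump g s := by
    intro s hs
    have hsm : s ∈ Set.Icc a b := ⟨hs.1, hs.2.le⟩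
    have h1 : Filter.Tendsto (fun x => |f x - f s|) (nhdsWithin s (Set.Ioi s))
        (nhds |Function.rightLim f s - f s|) := ((hft s hs).sub_const (f s)).abs
    have h2 : Filter.Tendsto (fun x => H * |g x - g s|) (nhdsWithin s (Set.Ioi s))
        (nhds (H * |Function.rightLim g s - g s|)) := by
      have := (((hgt s hs).sub_const (g s)).abs.const_mul H)
      rwa [← hrg s hs] at this
    have hev : ∀ᶠ x in nhdsWithin s (Set.Ioi s), |f x - f s| ≤ H * |g x - g s| := by
      filter_upwards [Ioo_mem_nhdsGT_of_mem (⟨le_refl s, hs.2⟩ : s ∈ Set.Ico s b)] with x hx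
      exact hf x ⟨hs.1.trans hx.1.le, hx.2.le⟩ s hsm
    have := le_of_tendsto_of_tendsto h1 h2 hev
    calc |rjump f s| = |Function.rightLim f s - f s| := rfl
      _ ≤ H * |Function.rightLim g s - g s| := this
      _ = H * rjump g s := by rw [← abs_of_nonneg (hjg0 s hs)]; rfl
  -- atoms
  have hatom : ∀ s ∈ Set.Ico a b, μ {s} = ENNReal.ofReal (rjump g s) := by
    intro s hs
    set d : ℕ → ℝ := fun n => min b (s + 1 / (n + 1)) with hd
    have hdpos : ∀ n : ℕ, s < d n := fun n =>
      lt_min hs.2 (lt_add_of_pos_right s (by positivity))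
    have hdb : ∀ n : ℕ, d n ≤ b := fun n => min_le_left _ _
    have hanti : Antitone fun n => Set.Ico s (d n) := by
      intro n m hnm
      apply Set.Ico_subset_Ico le_rfl
      apply min_le_min le_rfl
      have : (1:ℝ) / (m + 1) ≤ 1 / (n + 1) := by
        apply one_div_le_one_div_of_le (by positivity)
        exact_mod_cast by omega
      linarith
    have hiInter : (⋂ n, Set.Ico s (d n)) = {s} := by
      ext x
      simp only [Set.mem_iInter, Set.mem_Ico, Set.mem_singleton_iff]
      constructor
      · intro h
        have hsx : s ≤ x := (h 0).1
        rcases eq_or_lt_of_le hsx with h' | h'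
        · exact h'.symm
        · exfalso
          obtain ⟨n, hn⟩ := exists_nat_one_div_lt (sub_pos.2 h')
          have := (h n).2
          have : x < s + 1 / (n + 1) := lt_of_lt_of_le this (min_le_right _ _)
          linarith
      · rintro rfl
        exact fun n => ⟨le_rfl, hdpos n⟩
    have h1 : Filter.Tendsto (μ ∘ fun n => Set.Ico s (d n)) atTop (nhds (μ {s})) := by
      rw [← hiInter]
      apply tendsto_measure_iInter_atTop
        (fun n => measurableSet_Ico.nullMeasurableSet) hanti
      exact ⟨0, by rw [hμ s (d 0) hs.1 (hdpos 0).le (hdb 0)]; exact ENNReal.ofReal_ne_top⟩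
    have hdt : Filter.Tendsto d atTop (nhdsWithin s (Set.Ioi s)) := by
      apply tendsto_nhdsWithin_of_tendsto_nhds_of_eventually_within
      · have h1' : Filter.Tendsto (fun n : ℕ => s + 1 / ((n:ℝ) + 1)) atTop (nhds s) := by
          have := tendsto_one_div_add_atTop_nhds_zero_nat (𝕜 := ℝ)
          have := tendsto_const_nhds (x := s) (f := atTop (α := ℕ)) |>.add this
          simpa using this
        have := (tendsto_const_nhds (x := b) (f := atTop (α := ℕ))).min h1'
        rwa [min_eq_right hs.2.le] at this
      · exact Filter.Eventually.of_forall fun n => hdpos n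
    have h2 : Filter.Tendsto (μ ∘ fun n => Set.Ico s (d n)) atTop
        (nhds (ENNReal.ofReal (rjump g s))) := by
      have hgd : Filter.Tendsto (fun n => g (d n) - g s) atTop
          (nhds (Function.rightLim G s - g s)) := ((hgt s hs).comp hdt).sub_const (g s)
      have : Filter.Tendsto (fun n => ENNReal.ofReal (g (d n) - g s)) atTop
          (nhds (ENNReal.ofReal (Function.rightLim G s - g s))) :=
        (ENNReal.continuous_ofReal.tendsto _).comp hgd
      have heq : (μ ∘ fun n => Set.Ico s (d n)) = fun n => ENNReal.ofReal (g (d n) - g s) := by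
        funext n
        exact hμ s (d n) hs.1 (hdpos n).le (hdb n)
      rw [heq]
      have : rjump g s = Function.rightLim G s - g s := by
        simp only [rjump, hrg s hs]
      rw [this]
      exact ‹Filter.Tendsto (fun n => ENNReal.ofReal (g (d n) - g s)) atTop _›
    exact tendsto_nhds_unique h1 h2
  -- jump set countable
  have hDc : Set.Countable {s : ℝ | s ∈ Set.Ico a b ∧ rjump g s ≠ 0} := by
    apply hGmono.countable_not_continuousAt.mono
    rintro s ⟨hs, hne⟩
    simp only [Set.mem_setOf_eq]
    intro hc
    apply hne
    have h1 : Function.rightLim G s = G s :=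
      hGmono.continuousWithinAt_Ioi_iff_rightLim_eq.1 hc.continuousWithinAt
    have := hGg s ⟨hs.1, hs.2.le⟩
    simp only [rjump, hrg s hs, h1, this, sub_self]
  -- measure of countable subsets of the jump set
  have hμE : ∀ E : Set ℝ, E ⊆ {s : ℝ | s ∈ Set.Ico a b ∧ rjump g s ≠ 0} →
      μ E = ∑' s : E, ENNReal.ofReal (rjump g ↑s) := by
    intro E hE
    have hEc : E.Countable := hDc.mono hE
    have hbU : E = ⋃ s ∈ E, {s} := by simp
    have h1 : μ E = ∑' s : E, μ {(s : ℝ)} := by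
      conv_lhs => rw [hbU]
      exact measure_biUnion hEc (fun x _ y _ hxy => by simp [Set.disjoint_singleton, hxy])
        (fun s _ => measurableSet_singleton s)
    rw [h1]
    exact tsum_congr fun s => hatom ↑s (hE s.2).1
  clear hFtend hfF_ev hFf hFG
  set D : Set ℝ := {s : ℝ | s ∈ Set.Ico a b ∧ rjump g s ≠ 0} with hDdef
  have hDsub : D ⊆ Set.Ico a b := fun s hs => hs.1
  haveI : Countable ↥D := hDc.to_subtype
  have hjf0 : ∀ s ∈ Set.Ico a b, rjump g s = 0 → rjump f s = 0 := by
    intro s hs h0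
    have := hjf s hs
    rw [h0, mul_zero] at this
    exact abs_eq_zero.1 (le_antisymm this (abs_nonneg _))
  have hμD_ne : μ D ≠ ⊤ := by
    refine ((measure_mono hDsub).trans_lt ?_).ne
    rw [hμ a b le_rfl hab le_rfl]
    exact ENNReal.ofReal_lt_top
  have hsumg : Summable (fun s : D => rjump g ↑s) := by
    have h1 : (∑' s : D, ENNReal.ofReal (rjump g ↑s)) ≠ ⊤ := by
      rw [← hμE D (subset_refl D)]; exact hμD_ne
    exact (ENNReal.summable_toReal h1).congr fun s => ENNReal.toReal_ofReal (hjg0 _ s.2.1)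
  have hsumg_abs : Summable (fun s : D => |rjump g ↑s|) :=
    hsumg.congr fun s => (abs_of_nonneg (hjg0 _ s.2.1)).symm
  have hsumf_abs : Summable (fun s : D => |rjump f ↑s|) :=
    Summable.of_nonneg_of_le (fun s => abs_nonneg _) (fun s => hjf _ s.2.1) (hsumg.mul_left H)
  -- master summability / tsum-restriction lemma
  have hsummain : ∀ v : ℝ → ℝ, Summable (fun s : D => |v ↑s|) →
      ∀ A : Set ℝ, (∀ s ∈ A, v s ≠ 0 → s ∈ D) →
      Summable (Set.indicator A v) ∧
        (∑' s : ℝ, Set.indicator A v s) = ∑' s : D, Set.indicator A v ↑s := by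
    intro v hv A hA
    have hsupp : Function.support (Set.indicator A v) ⊆ D := by
      intro s hs
      rw [Function.mem_support] at hs
      by_cases h : s ∈ A
      · rw [Set.indicator_of_mem h] at hs; exact hA s h hs
      · rw [Set.indicator_of_notMem h] at hs; exact absurd rfl hs
    have hsub : Summable (fun s : D => Set.indicator A v ↑s) := by
      apply Summable.of_abs
      refine Summable.of_nonneg_of_le (fun s => abs_nonneg _) ?_ hv
      intro s
      by_cases h : (s : ℝ) ∈ A <;>
        simp [Set.indicator_of_mem, Set.indicator_of_notMem, h, abs_nonneg]
    refine ⟨?_, (tsum_subtype_eq_of_support_subset hsupp).symm⟩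
    rw [← Set.indicator_eq_self.2 hsupp]
    exact summable_subtype_iff_indicator.1 hsub
  have hcond_g : ∀ c e : ℝ, a ≤ c → e ≤ b → ∀ s ∈ Set.Ico c e, rjump g s ≠ 0 → s ∈ D :=
    fun c e hc he s hs hne => ⟨⟨hc.trans hs.1, hs.2.trans_le he⟩, hne⟩
  have hcond_f : ∀ c e : ℝ, a ≤ c → e ≤ b → ∀ s ∈ Set.Ico c e, rjump f s ≠ 0 → s ∈ D := by
    intro c e hc he s hs hne
    have hsab : s ∈ Set.Ico a b := ⟨hc.trans hs.1, hs.2.trans_le he⟩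
    refine ⟨hsab, fun h0 => hne (hjf0 s hsab h0)⟩
  -- tsum of g-jumps over an interval equals a measure
  have hjpm : ∀ s : ℝ, a ≤ s → s ≤ b →
      (∑' v : ℝ, Set.indicator (Set.Ico s b) (rjump g) v) = (μ (D ∩ Set.Ico s b)).toReal := by
    intro s has hsb
    have hsupp : Function.support (Set.indicator (Set.Ico s b) (rjump g)) ⊆ D ∩ Set.Ico s b := by
      intro v hv
      rw [Function.mem_support] at hv
      by_cases h : v ∈ Set.Ico s b
      · rw [Set.indicator_of_mem h] at hv; exact ⟨hcond_g s b has le_rfl v h hv, h⟩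
      · rw [Set.indicator_of_notMem h] at hv; exact absurd rfl hv
    rw [← tsum_subtype_eq_of_support_subset hsupp]
    rw [hμE (D ∩ Set.Ico s b) Set.inter_subset_left,
      ENNReal.tsum_toReal_eq fun _ => ENNReal.ofReal_ne_top]
    refine tsum_congr fun v => ?_
    rw [Set.indicator_of_mem v.2.2, ENNReal.toReal_ofReal (hjg0 _ v.2.1.1)]
  -- decomposition of jumpPart
  have hjp_split : ∀ s : ℝ, a ≤ s → s ≤ b → jumpPart g a b =
      jumpPart g a s + (μ (D ∩ Set.Ico s b)).toReal := by
    intro s has hsb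
    have hunion : Set.Ico a s ∪ Set.Ico s b = Set.Ico a b := Set.Ico_union_Ico_eq_Ico has hsb
    have hdisj : Disjoint (Set.Ico a s) (Set.Ico s b) := Set.Ico_disjoint_Ico_same
    have hind : ∀ v : ℝ, Set.indicator (Set.Ico a b) (rjump g) v =
        Set.indicator (Set.Ico a s) (rjump g) v + Set.indicator (Set.Ico s b) (rjump g) v := by
      intro v; rw [← hunion, Set.indicator_union_of_disjoint hdisj]
    have hs1 : Summable (Set.indicator (Set.Ico a s) (rjump g)) :=
      (hsummain _ hsumg_abs _ (hcond_g a s le_rfl hsb)).1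
    have hs2 : Summable (Set.indicator (Set.Ico s b) (rjump g)) :=
      (hsummain _ hsumg_abs _ (hcond_g s b has le_rfl)).1
    calc jumpPart g a b = ∑' v : ℝ, (Set.indicator (Set.Ico a s) (rjump g) v +
          Set.indicator (Set.Ico s b) (rjump g) v) := tsum_congr hind
      _ = jumpPart g a s + (μ (D ∩ Set.Ico s b)).toReal := by
          rw [Summable.tsum_add hs1 hs2, hjpm s has hsb]; rfl
  -- contPart difference equals measure of the continuous part
  have hK1 : ∀ s : ℝ, a ≤ s → s ≤ b →
      contPart g a b - contPart g a s = (μ (Set.Ico s b \ D)).toReal := by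
    intro s has hsb
    have hmd : μ (Set.Ico s b \ D) = μ (Set.Ico s b) - μ (D ∩ Set.Ico s b) := by
      rw [show Set.Ico s b \ D = Set.Ico s b \ (D ∩ Set.Ico s b) by
        rw [Set.inter_comm, Set.diff_self_inter]]
      exact measure_diff Set.inter_subset_right
        ((hDc.mono Set.inter_subset_left).measurableSet.nullMeasurableSet)
        ((measure_mono Set.inter_subset_left).trans_lt (lt_top_iff_ne_top.2 hμD_ne)).ne
    have hfin : μ (Set.Ico s b) ≠ ⊤ := by
      rw [hμ s b has hsb le_rfl]; exact ENNReal.ofReal_ne_top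
    have hle : μ (D ∩ Set.Ico s b) ≤ μ (Set.Ico s b) := measure_mono Set.inter_subset_right
    have htr : (μ (Set.Ico s b \ D)).toReal =
        (μ (Set.Ico s b)).toReal - (μ (D ∩ Set.Ico s b)).toReal := by
      rw [hmd, ENNReal.toReal_sub_of_le hle hfin]
    have hgsb : (μ (Set.Ico s b)).toReal = g b - g s := by
      rw [hμ s b has hsb le_rfl, ENNReal.toReal_ofReal
        (sub_nonneg.2 (hg ⟨has, hsb⟩ (Set.right_mem_Icc.2 hab) hsb))]
    have := hjp_split s has hsb
    simp only [contPart]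
    rw [htr, hgsb]
    linarith
  set S : Set ℝ := Set.Ico a b \ D with hSdef
  have hSsub : S ⊆ Set.Ico a b := Set.diff_subset
  have hSm : MeasurableSet S := measurableSet_Ico.diff hDc.measurableSet
  have hμS_ne : μ S ≠ ⊤ := by
    refine ((measure_mono hSsub).trans_lt ?_).ne
    rw [hμ a b le_rfl hab le_rfl]; exact ENNReal.ofReal_lt_top
  haveI hfinS : IsFiniteMeasure (μ.restrict S) :=
    ⟨by rwa [Measure.restrict_apply_univ, lt_top_iff_ne_top]⟩
  -- boundedness constants
  have hgba : g a ≤ g b := hg (Set.left_mem_Icc.2 hab) (Set.right_mem_Icc.2 hab) hab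
  set Cf : ℝ := |f a| + H * (g b - g a) with hCf
  have hfbd : ∀ t ∈ Set.Icc a b, |f t| ≤ Cf := by
    intro t ht
    have h1 : |f t - f a| ≤ H * |g t - g a| := hf t ht a (Set.left_mem_Icc.2 hab)
    have h2 : |g t - g a| = g t - g a := abs_of_nonneg (sub_nonneg.2 (hg (Set.left_mem_Icc.2 hab) ht ht.1))
    have h3 : g t ≤ g b := hg ht (Set.right_mem_Icc.2 hab) ht.2
    have h4 : |f t| ≤ |f a| + |f t - f a| := by
      calc |f t| = |f a + (f t - f a)| := by ring_nf
        _ ≤ |f a| + |f t - f a| := abs_add_le _ _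
    rw [h2] at h1
    nlinarith [abs_nonneg (f a)]
  set Cg : ℝ := H * (b - a) with hCg
  have hCg0 : 0 ≤ Cg := mul_nonneg hH.le (by linarith)
  have hgCbd : ∀ s ∈ Set.Icc a b, |contPart g a b - contPart g a s| ≤ Cg := by
    intro s hs
    have := hgC b (Set.right_mem_Icc.2 hab) s hs
    have h2 : |b - s| ≤ b - a := by rw [abs_of_nonneg (by linarith [hs.2])]; linarith [hs.1]
    calc |contPart g a b - contPart g a s| ≤ H * |b - s| := this
      _ ≤ H * (b - a) := by nlinarith
  -- contPart at a
  have hjpa : ∀ u : ℝ → ℝ, jumpPart u a a = 0 := by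
    intro u; simp [jumpPart]
  have hcfa : contPart f a a = f a := by simp [contPart, hjpa]
  have hcga : contPart g a a = g a := by simp [contPart, hjpa]
  -- the tsum in the statement
  set W : ℝ → ℝ := fun u => f u * rjump g u + rjump f u * (contPart g a b - contPart g a u)
    with hW
  have hsumW_D : Summable (fun s : D => W ↑s) := by
    apply Summable.of_abs
    refine Summable.of_nonneg_of_le (fun s => abs_nonneg _) ?_
      ((hsumg.mul_left Cf).add (hsumf_abs.mul_right Cg))
    intro s
    have h1 : |W ↑s| ≤ |f ↑s| * rjump g ↑s + |rjump f ↑s| * Cg := by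
      calc |W ↑s| ≤ |f ↑s * rjump g ↑s| + |rjump f ↑s * (contPart g a b - contPart g a ↑s)| :=
            abs_add_le _ _
        _ ≤ |f ↑s| * rjump g ↑s + |rjump f ↑s| * Cg := by
            rw [abs_mul, abs_mul, abs_of_nonneg (hjg0 _ s.2.1)]
            have := hgCbd ↑s ⟨s.2.1.1, s.2.1.2.le⟩
            gcongr
    refine h1.trans ?_
    have := hfbd ↑s ⟨s.2.1.1, s.2.1.2.le⟩
    gcongr
    exact hjg0 _ s.2.1
  have hsumT1 : Summable (fun s : D => f ↑s * rjump g ↑s) := by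
    apply Summable.of_abs
    refine Summable.of_nonneg_of_le (fun s => abs_nonneg _) ?_ (hsumg.mul_left Cf)
    intro s
    rw [abs_mul, abs_of_nonneg (hjg0 _ s.2.1)]
    have := hfbd ↑s ⟨s.2.1.1, s.2.1.2.le⟩
    gcongr
    exact hjg0 _ s.2.1
  have hsumT2 : Summable (fun s : D => rjump f ↑s * (contPart g a b - contPart g a ↑s)) := by
    apply Summable.of_abs
    refine Summable.of_nonneg_of_le (fun s => abs_nonneg _) ?_ (hsumf_abs.mul_right Cg)
    intro s
    rw [abs_mul]
    have := hgCbd ↑s ⟨s.2.1.1, s.2.1.2.le⟩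
    gcongr
  have hsumW_abs : Summable (fun s : D => |W ↑s|) := hsumW_D.abs
  have hTfull : (∑' s : ℝ, Set.indicator (Set.Ico a b) W s) =
      (∑' s : D, f ↑s * rjump g ↑s)
        + ∑' s : D, rjump f ↑s * (contPart g a b - contPart g a ↑s) := by
    have hcondW : ∀ s ∈ Set.Ico a b, W s ≠ 0 → s ∈ D := by
      intro s hs hne
      refine ⟨hs, fun h0 => hne ?_⟩
      simp [hW, h0, hjf0 s hs h0]
    rw [(hsummain W hsumW_abs (Set.Ico a b) hcondW).2]
    rw [show (fun s : D => Set.indicator (Set.Ico a b) W ↑s) = fun s : D => W ↑s from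
      funext fun s => Set.indicator_of_mem s.2.1 W]
    exact Summable.tsum_add hsumT1 hsumT2
  -- positive and negative jump parts of f (for measurability of jumpPart)
  set posf : ℝ → ℝ := fun v => max (rjump f v) 0 with hposfdef
  set negf : ℝ → ℝ := fun v => max (-(rjump f v)) 0 with hnegfdef
  have hposf_nonneg : ∀ v, 0 ≤ posf v := fun v => le_max_right _ _
  have hnegf_nonneg : ∀ v, 0 ≤ negf v := fun v => le_max_right _ _
  have hposf_le : ∀ v, posf v ≤ |rjump f v| := fun v => max_le (le_abs_self _) (abs_nonneg _)
  have hnegf_le : ∀ v, negf v ≤ |rjump f v| := fun v => max_le (neg_le_abs _) (abs_nonneg _)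
  have hposf_ne : ∀ v, posf v ≠ 0 → rjump f v ≠ 0 := by
    intro v hv h0; exact hv (by simp [hposfdef, h0])
  have hnegf_ne : ∀ v, negf v ≠ 0 → rjump f v ≠ 0 := by
    intro v hv h0; exact hv (by simp [hnegfdef, h0])
  have hsum_posf : Summable (fun s : D => |posf ↑s|) :=
    Summable.of_nonneg_of_le (fun s => abs_nonneg _)
      (fun s => by rw [abs_of_nonneg (hposf_nonneg _)]; exact hposf_le _) hsumf_abs
  have hsum_negf : Summable (fun s : D => |negf ↑s|) :=
    Summable.of_nonneg_of_le (fun s => abs_nonneg _)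
      (fun s => by rw [abs_of_nonneg (hnegf_nonneg _)]; exact hnegf_le _) hsumf_abs
  have hcond_pos : ∀ c : ℝ, c ≤ b → ∀ s ∈ Set.Ico a c, posf s ≠ 0 → s ∈ D :=
    fun c hc s hs hne => hcond_f a c le_rfl hc s hs (hposf_ne s hne)
  have hcond_neg : ∀ c : ℝ, c ≤ b → ∀ s ∈ Set.Ico a c, negf s ≠ 0 → s ∈ D :=
    fun c hc s hs hne => hcond_f a c le_rfl hc s hs (hnegf_ne s hne)
  set p : ℝ → ℝ := fun t => ∑' s : ℝ, Set.indicator (Set.Ico a (min t b)) posf s with hpdef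
  set q : ℝ → ℝ := fun t => ∑' s : ℝ, Set.indicator (Set.Ico a (min t b)) negf s with hqdef
  have hpmono : Monotone p := by
    intro t u htu
    refine Summable.tsum_le_tsum (fun v => ?_)
      (hsummain posf hsum_posf _ (hcond_pos _ (min_le_right t b))).1
      (hsummain posf hsum_posf _ (hcond_pos _ (min_le_right u b))).1
    exact Set.indicator_le_indicator_of_subset
      (Set.Ico_subset_Ico_right (min_le_min htu le_rfl)) hposf_nonneg v
  have hqmono : Monotone q := by
    intro t u htu
    refine Summable.tsum_le_tsum (fun v => ?_)
      (hsummain negf hsum_negf _ (hcond_neg _ (min_le_right t b))).1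
      (hsummain negf hsum_negf _ (hcond_neg _ (min_le_right u b))).1
    exact Set.indicator_le_indicator_of_subset
      (Set.Ico_subset_Ico_right (min_le_min htu le_rfl)) hnegf_nonneg v
  set Mf : ℝ := ∑' s : D, |rjump f ↑s| with hMfdef
  have hgen_bd : ∀ (v : ℝ → ℝ), (∀ x, 0 ≤ v x) → (∀ x, v x ≤ |rjump f x|) →
      Summable (fun s : D => |v ↑s|) →
      (∀ c : ℝ, c ≤ b → ∀ s ∈ Set.Ico a c, v s ≠ 0 → s ∈ D) →
      ∀ t : ℝ, 0 ≤ (∑' s : ℝ, Set.indicator (Set.Ico a (min t b)) v s) ∧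
        (∑' s : ℝ, Set.indicator (Set.Ico a (min t b)) v s) ≤ Mf := by
    intro v hv0 hvle hvsum hvcond t
    constructor
    · exact tsum_nonneg fun s => Set.indicator_nonneg (fun x _ => hv0 x) s
    · rw [(hsummain v hvsum _ (hvcond _ (min_le_right t b))).2]
      refine Summable.tsum_le_tsum (fun s => ?_) ?_ hsumf_abs
      · by_cases h : (s : ℝ) ∈ Set.Ico a (min t b)
        · rw [Set.indicator_of_mem h]; exact hvle _
        · rw [Set.indicator_of_notMem h]; exact abs_nonneg _
      · refine Summable.of_nonneg_of_le
          (fun s => Set.indicator_nonneg (fun x _ => hv0 x) _) (fun s => ?_) hsumf_abs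
        by_cases h : (s : ℝ) ∈ Set.Ico a (min t b)
        · rw [Set.indicator_of_mem h]; exact hvle _
        · rw [Set.indicator_of_notMem h]; exact abs_nonneg _
  have hpbd : ∀ t, 0 ≤ p t ∧ p t ≤ Mf :=
    fun t => hgen_bd posf hposf_nonneg hposf_le hsum_posf hcond_pos t
  have hqbd : ∀ t, 0 ≤ q t ∧ q t ≤ Mf :=
    fun t => hgen_bd negf hnegf_nonneg hnegf_le hsum_negf hcond_neg t
  -- p - q equals jumpPart f a on S
  have hpq : ∀ t ∈ S, p t - q t = jumpPart f a t := by
    intro t ht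
    have htb : t < b := (hSsub ht).2
    have hmin : min t b = t := min_eq_left htb.le
    have hind : ∀ v : ℝ, Set.indicator (Set.Ico a t) (rjump f) v =
        Set.indicator (Set.Ico a t) posf v - Set.indicator (Set.Ico a t) negf v := by
      intro v
      by_cases h : v ∈ Set.Ico a t
      · rw [Set.indicator_of_mem h, Set.indicator_of_mem h, Set.indicator_of_mem h]
        simp only [hposfdef, hnegfdef]
        rcases le_total (rjump f v) 0 with h' | h'
        · rw [max_eq_right h', max_eq_left (by linarith)]; ring
        · rw [max_eq_left h', max_eq_right (by linarith)]; ring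
      · rw [Set.indicator_of_notMem h, Set.indicator_of_notMem h,
          Set.indicator_of_notMem h]; ring
    have hsp : Summable (Set.indicator (Set.Ico a t) posf) := by
      have := (hsummain posf hsum_posf _ (hcond_pos t htb.le)).1
      simpa using this
    have hsq : Summable (Set.indicator (Set.Ico a t) negf) := by
      have := (hsummain negf hsum_negf _ (hcond_neg t htb.le)).1
      simpa using this
    simp only [hpdef, hqdef, hmin, jumpPart]
    rw [← Summable.tsum_sub hsp hsq]
    exact (tsum_congr hind).symm
  -- the point-mass part of the tsum, as integrals over S
  have hφint : ∀ s : D, (∫ t in S, Set.indicator (Set.Ico (↑s : ℝ) b)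
      (fun _ => rjump f ↑s) t ∂μ) = rjump f ↑s * (contPart g a b - contPart g a ↑s) := by
    intro s
    rw [MeasureTheory.integral_indicator_const (rjump f ↑s) measurableSet_Ico,
      measureReal_def, Measure.restrict_apply measurableSet_Ico]
    have hset : Set.Ico (↑s : ℝ) b ∩ S = Set.Ico (↑s : ℝ) b \ D := by
      ext x
      simp only [hSdef, Set.mem_inter_iff, Set.mem_diff, Set.mem_Ico]
      constructor
      · rintro ⟨h1, _, h3⟩; exact ⟨h1, h3⟩
      · rintro ⟨⟨h1, h2⟩, h3⟩; exact ⟨⟨h1, h2⟩, ⟨s.2.1.1.trans h1, h2⟩, h3⟩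
    rw [hset, ← hK1 (↑s : ℝ) s.2.1.1 s.2.1.2.le, smul_eq_mul, mul_comm]
  have hmeasφ : ∀ s : D, AEStronglyMeasurable (fun t => Set.indicator (Set.Ico (↑s : ℝ) b)
      (fun _ => rjump f ↑s) t) (μ.restrict S) :=
    fun s => (measurable_const.indicator measurableSet_Ico).aestronglyMeasurable
  have hlint : (∑' s : D, ∫⁻ t, ‖Set.indicator (Set.Ico (↑s : ℝ) b)
      (fun _ => rjump f ↑s) t‖₊ ∂(μ.restrict S)) ≠ ⊤ := by
    have hle : ∀ s : D, (∫⁻ t, ‖Set.indicator (Set.Ico (↑s : ℝ) b)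
        (fun _ => rjump f ↑s) t‖₊ ∂(μ.restrict S)) ≤ (‖rjump f ↑s‖₊ : ℝ≥0∞) * μ S := by
      intro s
      calc ∫⁻ t, ‖Set.indicator (Set.Ico (↑s : ℝ) b) (fun _ => rjump f ↑s) t‖₊
            ∂(μ.restrict S)
          ≤ ∫⁻ _, (‖rjump f ↑s‖₊ : ℝ≥0∞) ∂(μ.restrict S) := by
            refine lintegral_mono fun t => ?_
            by_cases h : t ∈ Set.Ico (↑s : ℝ) b
            · rw [Set.indicator_of_mem h]
            · rw [Set.indicator_of_notMem h]; simp
        _ = (‖rjump f ↑s‖₊ : ℝ≥0∞) * μ S := by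
            rw [lintegral_const, Measure.restrict_apply_univ]
    refine ne_top_of_le_ne_top ?_ (ENNReal.tsum_le_tsum hle)
    rw [ENNReal.tsum_mul_right]
    refine ENNReal.mul_ne_top (ENNReal.tsum_coe_ne_top_iff_summable.2 ?_) hμS_ne
    refine NNReal.summable_coe.1 (hsumf_abs.congr fun s => ?_)
    rw [coe_nnnorm, Real.norm_eq_abs]
  -- tsum over D of φ equals jumpPart on S
  have heqS : ∀ t ∈ S, (∑' s : D, Set.indicator (Set.Ico (↑s : ℝ) b)
      (fun _ => rjump f ↑s) t) = p t - q t := by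
    intro t ht
    have htb : t < b := (hSsub ht).2
    have step1 : ∀ s : D, Set.indicator (Set.Ico (↑s : ℝ) b) (fun _ => rjump f ↑s) t
        = Set.indicator (Set.Ico a t) (rjump f) ↑s := by
      intro s
      rcases lt_or_ge (↑s : ℝ) t with h | h
      · rw [Set.indicator_of_mem (Set.mem_Ico.mpr ⟨h.le, htb⟩),
          Set.indicator_of_mem (Set.mem_Ico.mpr ⟨s.2.1.1, h⟩)]
      · have h1 : t ∉ Set.Ico (↑s : ℝ) b := by
          rintro ⟨h1, _⟩
          exact ht.2 (show t ∈ D from le_antisymm h h1 ▸ s.2)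
        have h2 : (↑s : ℝ) ∉ Set.Ico a t := fun hh => absurd hh.2 (not_lt.2 h)
        rw [Set.indicator_of_notMem h1, Set.indicator_of_notMem h2]
    rw [tsum_congr step1, hpq t ht]
    exact ((hsummain (fun v => rjump f v) hsumf_abs (Set.Ico a t)
      (hcond_f a t le_rfl htb.le)).2).symm
  -- T2 as an integral
  have hT2 : (∑' s : D, rjump f ↑s * (contPart g a b - contPart g a ↑s)) =
      ∫ t in S, (p t - q t) ∂μ := by
    calc (∑' s : D, rjump f ↑s * (contPart g a b - contPart g a ↑s))
        = ∑' s : D, ∫ t in S, Set.indicator (Set.Ico (↑s : ℝ) b)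
            (fun _ => rjump f ↑s) t ∂μ := (tsum_congr hφint).symm
      _ = ∫ t in S, (∑' s : D, Set.indicator (Set.Ico (↑s : ℝ) b)
            (fun _ => rjump f ↑s) t) ∂μ := (integral_tsum hmeasφ hlint).symm
      _ = ∫ t in S, (p t - q t) ∂μ := setIntegral_congr_fun hSm heqS
  -- integrability facts
  have hfS : IntegrableOn f S μ := hfi.mono_set hSsub
  have hpqint : IntegrableOn (fun t => p t - q t) S μ := by
    refine ⟨(hpmono.measurable.sub hqmono.measurable).aestronglyMeasurable, ?_⟩
    apply HasFiniteIntegral.of_bounded (C := Mf + Mf)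
    filter_upwards with t
    rw [Real.norm_eq_abs]
    have h1 := hpbd t; have h2 := hqbd t
    exact abs_le.2 ⟨by linarith [h1.1, h1.2, h2.1, h2.2], by linarith [h1.1, h1.2, h2.1, h2.2]⟩
  have hconstS : IntegrableOn (fun _ => f a) S μ :=
    integrableOn_const hμS_ne
  -- integral splitting
  have hIsplit : ∫ x in Set.Ico a b, f x ∂μ =
      (∑' s : D, f ↑s * rjump g ↑s) + ∫ x in S, f x ∂μ := by
    have h1 : ∫ x in Set.Ico a b, f x ∂μ = ∫ x in D ∪ S, f x ∂μ := by
      rw [hSdef, Set.union_diff_cancel hDsub]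
    rw [h1, setIntegral_union disjoint_sdiff_self_right hSm (hfi.mono_set hDsub) hfS]
    congr 1
    rw [setIntegral_countable f hDc (hfi.mono_set hDsub)]
    refine tsum_congr fun s => ?_
    rw [measureReal_def, hatom ↑s s.2.1, ENNReal.toReal_ofReal (hjg0 _ s.2.1), smul_eq_mul, mul_comm]
  -- μ S in contPart terms
  have hX : contPart g a b - g a = (μ S).toReal := by
    have := hK1 a le_rfl hab
    rw [hcga] at this
    rw [this, hSdef]
  -- the integral identities
  have e2 : ∫ t in S, (f a + (p t - q t)) ∂μ =
      (∫ _ in S, f a ∂μ) + ∫ t in S, (p t - q t) ∂μ := integral_add hconstS hpqint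
  have e1 : ∫ t in S, (f a + (p t - q t) - f t) ∂μ =
      (∫ t in S, (f a + (p t - q t)) ∂μ) - ∫ t in S, f t ∂μ :=
    integral_sub (hconstS.add hpqint) hfS
  have hconst : (∫ _ in S, f a ∂μ) = (μ S).toReal * f a := by
    rw [setIntegral_const, smul_eq_mul, measureReal_def]
  -- total identity
  have heq_total : contPart f a a * (contPart g a b - contPart g a a)
      + (∑' s : ℝ, Set.indicator (Set.Ico a b) W s)
      - (∫ x in Set.Ico a b, f x ∂μ)
      = ∫ t in S, (f a + (p t - q t) - f t) ∂μ := by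
    rw [hcfa, hcga, hTfull, hIsplit, hT2, e1, e2, hconst, hX]
    ring
  -- the final bound
  have hbound : ∀ t ∈ S, ‖f a + (p t - q t) - f t‖ ≤ H * (b - a) := by
    intro t ht
    have htI : t ∈ Set.Icc a b := ⟨(hSsub ht).1, (hSsub ht).2.le⟩
    have hlip := hfC a (Set.left_mem_Icc.2 hab) t htI
    rw [Real.norm_eq_abs, hpq t ht]
    have heq : f a + jumpPart f a t - f t = contPart f a a - contPart f a t := by
      simp only [contPart, hjpa]; ring
    rw [heq]
    have habs : |a - t| ≤ b - a := by
      rw [abs_sub_comm, abs_of_nonneg (by linarith [htI.1])]; linarith [htI.2]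
    calc |contPart f a a - contPart f a t| ≤ H * |a - t| := hlip
      _ ≤ H * (b - a) := by nlinarith
  have hnorm : ‖∫ t in S, (f a + (p t - q t) - f t) ∂μ‖ ≤ (H * (b - a)) * (μ S).toReal := by
    refine norm_setIntegral_le_of_norm_le_const (lt_top_iff_ne_top.2 hμS_ne) hbound
  have hμSle : (μ S).toReal ≤ H * (b - a) := by
    rw [← hX]
    have hlip := hgC b (Set.right_mem_Icc.2 hab) a (Set.left_mem_Icc.2 hab)
    rw [hcga] at hlip
    calc contPart g a b - g a ≤ |contPart g a b - g a| := le_abs_self _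
      _ ≤ H * |b - a| := hlip
      _ = H * (b - a) := by rw [abs_of_nonneg (by linarith)]
  have hμS0 : (0:ℝ) ≤ (μ S).toReal := ENNReal.toReal_nonneg
  calc |contPart f a a * (contPart g a b - contPart g a a)
      + (∑' s : ℝ, Set.indicator (Set.Ico a b) W s)
      - ∫ x in Set.Ico a b, f x ∂μ|
      = ‖∫ t in S, (f a + (p t - q t) - f t) ∂μ‖ := by
        rw [heq_total, Real.norm_eq_abs]
    _ ≤ (H * (b - a)) * (μ S).toReal := hnorm
    _ ≤ (H * (b - a)) * (H * (b - a)) := by nlinarith [mul_nonneg hH.le (sub_nonneg.2 hab)]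
    _ = H ^ 2 * (b - a) ^ 2 := by ring
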